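/- Let X be a zigzag poset, ι : X' ↪ X the inclusion of the alternating subposet, and η : id → ι_* ι* the unit of the adjunction ι* ⊣ ι_*. Then for every sheaf F of vector spaces on X, the induced map on global sections Γ(η_F) : Γ(F) → Γ(ι_* ι* F) is an isomorphism, where Γ = lim. -/

import Mathlib

open CategoryTheory

/-! Zigzag posets.  A zigzag poset is a finite poset whose Hasse diagram is a path
`x_0 — x_1 — ... — x_n` with arbitrarily oriented edges.  We encode the orientation
of the edge between `x_l` and `x_{l+1}` by `o l : Bool` (`true` means `x_l < x_{l+1}`),
and `x_i ≤ x_j` iff all the edges between them point from `x_i` towards `x_j`. -/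

/-- The order relation of the zigzag poset with edge orientations `o`. -/
def zigzagLE (o : ℕ → Bool) (i j : ℕ) : Prop :=
  (i ≤ j ∧ ∀ l, i ≤ l → l < j → o l = true) ∨
  (j ≤ i ∧ ∀ l, j ≤ l → l < i → o l = false)

theorem zigzagLE_refl (o : ℕ → Bool) (i : ℕ) : zigzagLE o i i :=
  Or.inl ⟨le_rfl, fun _ h1 h2 => absurd (lt_of_le_of_lt h1 h2) (lt_irrefl _)⟩

theorem zigzagLE_trans (o : ℕ → Bool) (i j l : ℕ)
    (h1 : zigzagLE o i j) (h2 : zigzagLE o j l) : zigzagLE o i l := by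
  rcases h1 with ⟨hij, hup1⟩ | ⟨hji, hdn1⟩ <;> rcases h2 with ⟨hjl, hup2⟩ | ⟨hlj, hdn2⟩
  · refine Or.inl ⟨le_trans hij hjl, fun m hm1 hm2 => ?_⟩
    rcases Nat.lt_or_ge m j with h | h
    · exact hup1 m hm1 h
    · exact hup2 m h hm2
  · rcases le_or_gt i l with h | h
    · exact Or.inl ⟨h, fun m hm1 hm2 => hup1 m hm1 (lt_of_lt_of_le hm2 hlj)⟩
    · exact Or.inr ⟨le_of_lt h, fun m hm1 hm2 => hdn2 m hm1 (lt_of_lt_of_le hm2 hij)⟩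
  · rcases le_or_gt i l with h | h
    · exact Or.inl ⟨h, fun m hm1 hm2 => hup2 m (le_trans hji hm1) hm2⟩
    · exact Or.inr ⟨le_of_lt h, fun m hm1 hm2 => hdn1 m (le_trans hjl hm1) hm2⟩
  · refine Or.inr ⟨le_trans hlj hji, fun m hm1 hm2 => ?_⟩
    rcases Nat.lt_or_ge m j with h | h
    · exact hdn2 m hm1 h
    · exact hdn1 m h hm2

theorem zigzagLE_antisymm (o : ℕ → Bool) (i j : ℕ)
    (h1 : zigzagLE o i j) (h2 : zigzagLE o j i) : i = j := by
  rcases h1 with ⟨hij, hup1⟩ | ⟨hji, hdn1⟩ <;>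
    rcases h2 with ⟨hji', hup2⟩ | ⟨hij', hdn2⟩
  · omega
  · rcases Nat.lt_or_ge i j with h | h
    · have ht := hup1 i le_rfl h
      have hf := hdn2 i le_rfl h
      simp [ht] at hf
    · omega
  · rcases Nat.lt_or_ge j i with h | h
    · have ht := hup2 j le_rfl h
      have hf := hdn1 j le_rfl h
      simp [ht] at hf
    · omega
  · omega

/-- The zigzag poset on `{x_0, ..., x_n}` with edge orientations `o`. -/
def Zigzag (n : ℕ) (o : ℕ → Bool) : Type := Fin (n + 1)

instance (n : ℕ) (o : ℕ → Bool) : PartialOrder (Zigzag n o) where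
  le i j := zigzagLE o (Fin.val i) (Fin.val j)
  le_refl i := zigzagLE_refl o _
  le_trans i j l := zigzagLE_trans o _ _ _
  le_antisymm i j h1 h2 := Fin.ext (zigzagLE_antisymm o _ _ h1 h2)

/-- The index of a point of the zigzag poset. -/
def Zigzag.idx {n : ℕ} {o : ℕ → Bool} (x : Zigzag n o) : ℕ := Fin.val x

/-- The alternating subposet `X' ⊆ X`: all minimal elements together with the
internal maximal elements (the maximal elements flanked by minimal elements on
both sides); this is the alternating sequence of minimal and internal maximal
elements of the zigzag. -/
def altSet (n : ℕ) (o : ℕ → Bool) : Set (Zigzag n o) :=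
  {x | IsMin x ∨ (IsMax x ∧ (∃ y : Zigzag n o, IsMin y ∧ y.idx < x.idx) ∧
    (∃ y : Zigzag n o, IsMin y ∧ x.idx < y.idx))}

/-- The alternating subposet, with the induced order. -/
def AltSub (n : ℕ) (o : ℕ → Bool) : Type := {x : Zigzag n o // x ∈ altSet n o}

instance (n : ℕ) (o : ℕ → Bool) : PartialOrder (AltSub n o) :=
  inferInstanceAs (PartialOrder {x : Zigzag n o // x ∈ altSet n o})

/-- The inclusion `ι : X' ↪ X` is order preserving. -/
lemma altIncl_monotone (n : ℕ) (o : ℕ → Bool) :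
    Monotone (fun x : AltSub n o => (x.val : Zigzag n o)) := fun _ _ h => h

/-- The restriction (pullback) functor `ι*` of sheaves along the inclusion of the
alternating subposet. -/
noncomputable def restrictAlt (n : ℕ) (o : ℕ → Bool) (C : Type*) [Category C] :
    (Zigzag n o ⥤ C) ⥤ (AltSub n o ⥤ C) :=
  (Functor.whiskeringLeft (AltSub n o) (Zigzag n o) C).obj (altIncl_monotone n o).functor

open CategoryTheory.Limits

section Aux

variable {n : ℕ} {o : ℕ → Bool}

local instance : Finite (Zigzag n o) := inferInstanceAs (Finite (Fin (n + 1)))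

lemma Zigzag.idx_ext {x y : Zigzag n o} (h : x.idx = y.idx) : x = y := Fin.ext h

/-- There is a minimal element below any element. -/
lemma zigzag_exists_min_le (x : Zigzag n o) : ∃ m : Zigzag n o, m ≤ x ∧ IsMin m := by
  obtain ⟨b, hb, hmin⟩ :=
    exists_minimal_le_of_wellFoundedLT (α := Zigzag n o) (fun _ => True) x trivial
  exact ⟨b, hb, fun y hy => hmin.2 trivial hy⟩

/-- If `x` is not in the alternating subposet, the minimal element below it is unique. -/
lemma zigzag_min_unique {x m₁ m₂ : Zigzag n o} (hx : x ∉ altSet n o)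
    (h₁ : IsMin m₁) (h₂ : IsMin m₂) (l₁ : m₁ ≤ x) (l₂ : m₂ ≤ x) : m₁ = m₂ := by
  -- helper for two minimal elements below `x` from the same side
  have up : ∀ m₁' m₂' : Zigzag n o, IsMin m₂' →
      m₁'.idx ≤ x.idx → (∀ l, m₁'.idx ≤ l → l < x.idx → o l = true) →
      m₂'.idx ≤ x.idx → m₁'.idx ≤ m₂'.idx → m₁' = m₂' := by
    intro m₁' m₂' hmin2 a ha b hle
    have h12 : m₁' ≤ m₂' :=
      Or.inl ⟨hle, fun l hl1 hl2 => ha l hl1 (lt_of_lt_of_le hl2 b)⟩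
    exact le_antisymm h12 (hmin2 h12)
  have down : ∀ m₁' m₂' : Zigzag n o, IsMin m₁' →
      x.idx ≤ m₂'.idx → (∀ l, x.idx ≤ l → l < m₂'.idx → o l = false) →
      x.idx ≤ m₁'.idx → m₁'.idx ≤ m₂'.idx → m₁' = m₂' := by
    intro m₁' m₂' hmin1 b hb a hle
    have h21 : m₂' ≤ m₁' :=
      Or.inr ⟨hle, fun l hl1 hl2 => hb l (le_trans a hl1) hl2⟩
    exact le_antisymm (hmin1 h21) h21
  -- mixed case yields a contradiction with `x ∉ altSet`
  have mixed : ∀ m₁' m₂' : Zigzag n o, IsMin m₁' → IsMin m₂' →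
      m₁'.idx ≤ x.idx → (∀ l, m₁'.idx ≤ l → l < x.idx → o l = true) →
      x.idx ≤ m₂'.idx → (∀ l, x.idx ≤ l → l < m₂'.idx → o l = false) →
      False := by
    intro m₁' m₂' hmin1 hmin2 a ha b hb
    rcases eq_or_lt_of_le a with heq | hlt1
    · exact hx (Or.inl (Zigzag.idx_ext heq ▸ hmin1))
    rcases eq_or_lt_of_le b with heq | hlt2
    · exact hx (Or.inl (Zigzag.idx_ext heq.symm ▸ hmin2))
    have hmax : IsMax x := by
      intro y hy
      have hy' : zigzagLE o x.idx y.idx := hy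
      rcases hy' with ⟨c, hc⟩ | ⟨c, hc⟩
      · rcases eq_or_lt_of_le c with heq | hlt
        · exact le_of_eq (Zigzag.idx_ext heq.symm)
        · have ht := hc x.idx le_rfl hlt
          have hf := hb x.idx le_rfl hlt2
          simp [ht] at hf
      · rcases eq_or_lt_of_le c with heq | hlt
        · exact le_of_eq (Zigzag.idx_ext heq)
        · have hf := hc (x.idx - 1) (by omega) (by omega)
          have ht := ha (x.idx - 1) (by omega) (by omega)
          simp [ht] at hf
    exact hx (Or.inr ⟨hmax, ⟨m₁', hmin1, hlt1⟩, ⟨m₂', hmin2, hlt2⟩⟩)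
  rcases l₁ with ⟨a₁, ha₁⟩ | ⟨a₁, ha₁⟩ <;> rcases l₂ with ⟨a₂, ha₂⟩ | ⟨a₂, ha₂⟩
  · rcases le_total m₁.idx m₂.idx with h | h
    · exact up m₁ m₂ h₂ a₁ ha₁ a₂ h
    · exact (up m₂ m₁ h₁ a₂ ha₂ a₁ h).symm
  · exact absurd (mixed m₁ m₂ h₁ h₂ a₁ ha₁ a₂ ha₂) (fun h => h)
  · exact absurd (mixed m₂ m₁ h₂ h₁ a₂ ha₂ a₁ ha₁) (fun h => h)
  · rcases le_total m₁.idx m₂.idx with h | h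
    · exact down m₁ m₂ h₁ a₂ ha₂ a₁ h
    · exact (down m₂ m₁ h₂ a₁ ha₁ a₂ h).symm

open CategoryTheory.Limits in
/-- The inclusion of the alternating subposet is an initial functor. -/
instance altIncl_initial (n : ℕ) (o : ℕ → Bool) :
    ((altIncl_monotone n o).functor).Initial := by
  constructor
  intro x
  obtain ⟨m, hmx, hm⟩ := zigzag_exists_min_le x
  by_cases hx : x ∈ altSet n o
  · -- `x` itself is in the subposet; it receives a map from everything.
    let t : CostructuredArrow (altIncl_monotone n o).functor x :=
      CostructuredArrow.mk (Y := (⟨x, hx⟩ : AltSub n o)) (homOfLE le_rfl)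
    have ht : ∀ a : CostructuredArrow (altIncl_monotone n o).functor x, Nonempty (a ⟶ t) := by
      intro a
      have hle : a.left ≤ (⟨x, hx⟩ : AltSub n o) := leOfHom a.hom
      exact ⟨CostructuredArrow.homMk (homOfLE hle) (Subsingleton.elim _ _)⟩
    haveI : Nonempty (CostructuredArrow (altIncl_monotone n o).functor x) := ⟨t⟩
    apply zigzag_isConnected
    intro a b
    exact (CategoryTheory.Zigzag.of_hom (ht a).some).trans
      (CategoryTheory.Zigzag.of_inv (ht b).some)
  · -- otherwise the unique minimal element below `x` receives a map from everything.
    let t : CostructuredArrow (altIncl_monotone n o).functor x :=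
      CostructuredArrow.mk (Y := (⟨m, Or.inl hm⟩ : AltSub n o)) (homOfLE hmx)
    have ht : ∀ a : CostructuredArrow (altIncl_monotone n o).functor x, Nonempty (a ⟶ t) := by
      intro a
      have hle : (a.left : AltSub n o).1 ≤ x := leOfHom a.hom
      have h2 : IsMin ((a.left : AltSub n o).1) ∨ (IsMax ((a.left : AltSub n o).1) ∧
          (∃ y : Zigzag n o, IsMin y ∧ y.idx < ((a.left : AltSub n o).1).idx) ∧
          (∃ y : Zigzag n o, IsMin y ∧ ((a.left : AltSub n o).1).idx < y.idx)) :=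
        (a.left : AltSub n o).2
      have heq : a.left = (⟨m, Or.inl hm⟩ : AltSub n o) := by
        rcases h2 with hmin | ⟨hmax, _, _⟩
        · exact Subtype.ext (zigzag_min_unique hx hmin hm hle hmx)
        · exact absurd ((le_antisymm hle (hmax hle)) ▸ (a.left : AltSub n o).2) hx
      exact ⟨CostructuredArrow.homMk (homOfLE (le_of_eq heq)) (Subsingleton.elim _ _)⟩
    haveI : Nonempty (CostructuredArrow (altIncl_monotone n o).functor x) := ⟨t⟩
    apply zigzag_isConnected
    intro a b
    exact (CategoryTheory.Zigzag.of_hom (ht a).some).trans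
      (CategoryTheory.Zigzag.of_inv (ht b).some)

open CategoryTheory.Limits in
/-- The cone natural transformation associated with a map into a limit. -/
noncomputable def limConeNat {J : Type} [SmallCategory J] {C : Type*} [Category C]
    (H : J ⥤ C) [HasLimit H] {V : C} (f : V ⟶ limit H) :
    (Functor.const J).obj V ⟶ H where
  app x := f ≫ limit.π H x
  naturality x y g := by simp

open CategoryTheory.Limits in
/-- The limit cone over `G`, viewed as a natural transformation out of the restriction
of the constant functor. -/
noncomputable def restConeNat {J J' : Type} [SmallCategory J] [SmallCategory J'] {C : Type*}
    [Category C] (ι : J' ⥤ J) (G : J' ⥤ C) [HasLimit G] :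
    ((Functor.whiskeringLeft J' J C).obj ι).obj ((Functor.const J).obj (limit G)) ⟶ G where
  app j := limit.π G j
  naturality x y g := by simp

open CategoryTheory.Limits in
/-- The canonical comparison `lim (R G) ⟶ lim G` (for `R` any right adjoint of the
restriction along `ι`) is an isomorphism. -/
lemma isIso_theta {J J' : Type} [SmallCategory J] [SmallCategory J'] {C : Type*} [Category C]
    [HasLimitsOfShape J C] [HasLimitsOfShape J' C]
    (ι : J' ⥤ J) (R : (J' ⥤ C) ⥤ (J ⥤ C))
    (adj : (Functor.whiskeringLeft J' J C).obj ι ⊣ R) (G : J' ⥤ C) :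
    IsIso (limit.pre (R.obj G) ι ≫ limMap (adj.counit.app G)) := by
  have key : ∀ (V : C) (f : V ⟶ limit (R.obj G)) (j : J'),
      f ≫ limit.pre (R.obj G) ι ≫ limMap (adj.counit.app G) ≫ limit.π G j =
        ((adj.homEquiv ((Functor.const J).obj V) G).symm (limConeNat (R.obj G) f)).app j := by
    intro V f j
    rw [Adjunction.homEquiv_counit]
    simp [limConeNat]
  -- the comparison map is a monomorphism
  have hmono : ∀ (V : C) (f₁ f₂ : V ⟶ limit (R.obj G)),
      f₁ ≫ limit.pre (R.obj G) ι ≫ limMap (adj.counit.app G) =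
      f₂ ≫ limit.pre (R.obj G) ι ≫ limMap (adj.counit.app G) → f₁ = f₂ := by
    intro V f₁ f₂ h
    have hsymm : (adj.homEquiv ((Functor.const J).obj V) G).symm (limConeNat (R.obj G) f₁) =
        (adj.homEquiv ((Functor.const J).obj V) G).symm (limConeNat (R.obj G) f₂) := by
      apply NatTrans.ext
      funext j
      rw [← key V f₁ j, ← key V f₂ j]
      rw [reassoc_of% h]
    have hd : limConeNat (R.obj G) f₁ = limConeNat (R.obj G) f₂ :=
      (adj.homEquiv _ _).symm.injective hsymm
    apply limit.hom_ext
    intro y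
    have := congrArg (fun (t : (Functor.const J).obj V ⟶ R.obj G) => t.app y) hd
    simpa [limConeNat] using this
  -- a section of the comparison map
  obtain ⟨ψ, hψθ⟩ : ∃ ψ : limit G ⟶ limit (R.obj G),
      ψ ≫ limit.pre (R.obj G) ι ≫ limMap (adj.counit.app G) = 𝟙 (limit G) := by
    refine ⟨limit.lift (R.obj G)
      ⟨limit G, (adj.homEquiv ((Functor.const J).obj (limit G)) G) (restConeNat ι G)⟩, ?_⟩
    apply limit.hom_ext
    intro j
    simp only [Functor.id_obj, Category.assoc]
    rw [key _ _ j]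
    have hd : limConeNat (R.obj G)
        (limit.lift (R.obj G)
          ⟨limit G, (adj.homEquiv ((Functor.const J).obj (limit G)) G) (restConeNat ι G)⟩) =
        (adj.homEquiv ((Functor.const J).obj (limit G)) G) (restConeNat ι G) := by
      apply NatTrans.ext
      funext y
      simp [limConeNat]
    rw [hd, Equiv.symm_apply_apply]
    simp [restConeNat]
  have hθψ : (limit.pre (R.obj G) ι ≫ limMap (adj.counit.app G)) ≫ ψ =
      𝟙 (limit (R.obj G)) := by
    apply hmono
    simp only [Category.assoc]
    rw [hψθ]
    simp
  exact ⟨ψ, hθψ, hψθ⟩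

open CategoryTheory.Limits in
/-- Generic form of the main statement: if `ι : J' ⥤ J` is initial and `R` is any right
adjoint of the restriction functor along `ι`, then `lim` applied to the unit of the
adjunction is an isomorphism. -/
lemma isIso_lim_map_unit {J J' : Type} [SmallCategory J] [SmallCategory J'] {C : Type*}
    [Category C] [HasLimitsOfShape J C] [HasLimitsOfShape J' C]
    (ι : J' ⥤ J) [ι.Initial] (R : (J' ⥤ C) ⥤ (J ⥤ C))
    (adj : (Functor.whiskeringLeft J' J C).obj ι ⊣ R) (F : J ⥤ C) :
    IsIso ((lim : (J ⥤ C) ⥤ C).map (adj.unit.app F)) := by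
  have hθiso := isIso_theta ι R adj (((Functor.whiskeringLeft J' J C).obj ι).obj F)
  have key : (lim : (J ⥤ C) ⥤ C).map (adj.unit.app F) ≫
      (limit.pre (R.obj (((Functor.whiskeringLeft J' J C).obj ι).obj F)) ι ≫
        limMap (adj.counit.app (((Functor.whiskeringLeft J' J C).obj ι).obj F))) =
      limit.pre F ι := by
    apply limit.hom_ext
    intro j
    have htri := NatTrans.congr_app (adj.left_triangle_components F) j
    simp only [NatTrans.comp_app, NatTrans.id_app, Functor.whiskeringLeft_obj_map,
      Functor.whiskerLeft_app, Functor.whiskeringLeft_obj_obj, Functor.comp_obj, Functor.id_obj] at htri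
    simp only [lim_map, Functor.whiskeringLeft_obj_obj, Functor.comp_obj, Functor.id_obj,
      Category.assoc, limMap_π, limit.pre_π, limit.pre_π_assoc, limMap_π_assoc]
    rw [htri]
    simp
  haveI : IsIso (limit.pre F ι) := inferInstance
  have heq : (lim : (J ⥤ C) ⥤ C).map (adj.unit.app F) =
      limit.pre F ι ≫ inv (limit.pre (R.obj (((Functor.whiskeringLeft J' J C).obj ι).obj F)) ι ≫
        limMap (adj.counit.app (((Functor.whiskeringLeft J' J C).obj ι).obj F))) := by
    rw [← key, Category.assoc, IsIso.hom_inv_id, Category.comp_id]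
  rw [heq]
  infer_instance

end Aux

/-- Let `X` be a zigzag poset, `ι : X' ↪ X` the inclusion of the
alternating subposet and `η : id → ι_* ι*` the unit of the adjunction `ι* ⊣ ι_*`
(where `ι_*` is any right adjoint of the restriction functor `ι*`).  Then for every
sheaf `F` of vector spaces on `X`, the induced map on global sections
`Γ(η_F) : Γ(F) → Γ(ι_* ι* F)` (with `Γ = lim`) is an isomorphism. -/
theorem lim_unit_restrictAlt_isIso (k : Type) [Field k] (n : ℕ) (o : ℕ → Bool)
    (pushforward : (AltSub n o ⥤ ModuleCat k) ⥤ (Zigzag n o ⥤ ModuleCat k))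
    (adj : restrictAlt n o (ModuleCat k) ⊣ pushforward)
    (F : Zigzag n o ⥤ ModuleCat k) :
    IsIso ((lim : (Zigzag n o ⥤ ModuleCat k) ⥤ ModuleCat k).map (adj.unit.app F)) := by
  exact isIso_lim_map_unit (altIncl_monotone n o).functor pushforward adj F
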